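/- arXiv:2209.14168 — 2 statements merged into one kernel-verified Lean document; each statement's English description precedes it below -/
import Mathlib

section
/- For every real a with 0 < a < 1, the map ψ_a(z₁,z₂) = ((1-a²)^{1/4} (1 - a z₂)^{-1/2} z₁, (z₂ - a)/(1 - a z₂)) maps the domain E = {(z₁,z₂) ∈ ℂ² : |z₂|² + |z₁|⁴ < 1} into itself; more precisely, for (z₁,z₂) ∈ E one has |ψ_a(z)₂|² + |ψ_a(z)₁|⁴ < 1. -/
/-- For `0 < a < 1`, the map
`ψ_a(z₁,z₂) = ((1-a²)^{1/4}(1 - a z₂)^{-1/2} z₁, (z₂-a)/(1-a z₂))` maps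
`E = {|z₂|² + |z₁|⁴ < 1}` into itself; in terms of moduli,
`|ψ_a(z)₂|² + |ψ_a(z)₁|⁴ = |z₂-a|²/|1-a z₂|² + (1-a²)|z₁|⁴/|1-a z₂|² < 1`. -/
theorem stmt_2 (a : ℝ) (ha0 : 0 < a) (ha1 : a < 1) (z : ℂ × ℂ)
    (hz : ‖z.2‖ ^ 2 + ‖z.1‖ ^ 4 < 1) :
    (‖z.2 - (a : ℂ)‖ / ‖1 - (a : ℂ) * z.2‖) ^ 2 +
      (1 - a ^ 2) * ‖z.1‖ ^ 4 / ‖1 - (a : ℂ) * z.2‖ ^ 2 < 1 := by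
  set x := z.2.re
  set y := z.2.im
  have h2 : ‖z.2‖ ^ 2 = x ^ 2 + y ^ 2 := by
    rw [Complex.sq_norm, Complex.normSq_apply]; ring
  have hA : ‖z.2 - (a : ℂ)‖ ^ 2 = (x - a) ^ 2 + y ^ 2 := by
    rw [Complex.sq_norm, Complex.normSq_apply]
    simp [Complex.sub_re, Complex.sub_im]
    ring
  have hD : ‖1 - (a : ℂ) * z.2‖ ^ 2 = (1 - a * x) ^ 2 + (a * y) ^ 2 := by
    rw [Complex.sq_norm, Complex.normSq_apply]
    simp [Complex.sub_re, Complex.sub_im, Complex.mul_re, Complex.mul_im]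
    ring
  have hw : (0:ℝ) ≤ ‖z.1‖ ^ 4 := by positivity
  have h1a : (0:ℝ) < 1 - a ^ 2 := by nlinarith
  have hZ : x ^ 2 + y ^ 2 < 1 := by nlinarith
  have hkey : (0:ℝ) < (1 - a ^ 2) * (1 - (x ^ 2 + y ^ 2)) :=
    mul_pos h1a (by linarith)
  have hDpos : 0 < ‖1 - (a : ℂ) * z.2‖ ^ 2 := by
    rw [hD]
    nlinarith [sq_nonneg (x - a), sq_nonneg y, hkey]
  have hmul : (1 - a ^ 2) * ‖z.1‖ ^ 4 <
      (1 - a ^ 2) * (1 - (x ^ 2 + y ^ 2)) := by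
    apply mul_lt_mul_of_pos_left _ h1a
    linarith
  rw [div_pow, ← add_div, div_lt_one hDpos, hA, hD]
  nlinarith [hmul]
end

section
/- Let 0 < b < 1, s = 1 - b, and 0 < a < 1. For complex numbers z_n with |z_n| < 1 (so that 1 + a z_n ≠ 0) and t ≥ 0, the inequality |(z_n + a)/(1 + a z_n) - b|² + s · t · (1 - a²)/|1 + a z_n|² < s² holds if and only if |z_n - b(1-a)/(1 + a - 2ab)|² + (1-b)(1+a)/(1 + a - 2ab) · t < (1 + a - 2b)/(1 + a - 2ab) + b²(1-a)²/(1 + a - 2ab)². -/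
set_option maxHeartbeats 800000


/-- the algebraic identity underlying Lemma 3.1: for `0 < b < 1`,
`s = 1 - b`, `0 < a < 1`, `|z_n| < 1` and `t ≥ 0`,
`|(z_n+a)/(1+a z_n) - b|² + s t (1-a²)/|1+a z_n|² < s²` iff
`|z_n - b(1-a)/(1+a-2ab)|² + (1-b)(1+a)/(1+a-2ab) · t
    < (1+a-2b)/(1+a-2ab) + b²(1-a)²/(1+a-2ab)²`. -/
theorem stmt_5 (b : ℝ) (hb0 : 0 < b) (hb1 : b < 1) (s : ℝ) (hs : s = 1 - b)
    (a : ℝ) (ha0 : 0 < a) (ha1 : a < 1) (zn : ℂ) (hzn : ‖zn‖ < 1)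
    (t : ℝ) (ht : 0 ≤ t) :
    (‖(zn + (a : ℂ)) / (1 + (a : ℂ) * zn) - (b : ℂ)‖ ^ 2 +
        s * t * (1 - a ^ 2) / ‖1 + (a : ℂ) * zn‖ ^ 2 < s ^ 2) ↔
    (‖zn - ((b * (1 - a) / (1 + a - 2 * a * b) : ℝ) : ℂ)‖ ^ 2 +
        (1 - b) * (1 + a) / (1 + a - 2 * a * b) * t
      < (1 + a - 2 * b) / (1 + a - 2 * a * b) +
          b ^ 2 * (1 - a) ^ 2 / (1 + a - 2 * a * b) ^ 2) := by
  set x := zn.re with hxdef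
  set y := zn.im with hydef
  have hc : 0 < 1 + a - 2 * a * b := by nlinarith
  have hden : (1 : ℂ) + (a : ℂ) * zn ≠ 0 := by
    intro h
    have h1 : ‖(a : ℂ) * zn‖ = a * ‖zn‖ := by
      rw [norm_mul, Complex.norm_real, Real.norm_eq_abs, abs_of_pos ha0]
    have h2 : (a : ℂ) * zn = -1 := by linear_combination h
    rw [h2] at h1
    simp at h1
    nlinarith
  have hD : 0 < Complex.normSq (1 + (a : ℂ) * zn) := Complex.normSq_pos.2 hden
  have hnum : (zn + (a : ℂ)) / (1 + (a : ℂ) * zn) - (b : ℂ) =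
      (zn * (1 - (a : ℂ) * b) + ((a : ℂ) - b)) / (1 + (a : ℂ) * zn) := by
    rw [eq_div_iff hden, sub_mul, div_mul_cancel₀ _ hden]
    ring
  have hD' : Complex.normSq (1 + (a : ℂ) * zn) = (1 + a * x) ^ 2 + (a * y) ^ 2 := by
    simp [Complex.normSq_apply, Complex.add_re, Complex.add_im, Complex.mul_re,
      Complex.mul_im, Complex.ofReal_re, Complex.ofReal_im]
    ring
  have hN1 : Complex.normSq (zn * (1 - (a : ℂ) * b) + ((a : ℂ) - b)) =
      ((1 - a * b) * x + (a - b)) ^ 2 + ((1 - a * b) * y) ^ 2 := by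
    simp [Complex.normSq_apply, Complex.add_re, Complex.add_im, Complex.mul_re,
      Complex.mul_im, Complex.sub_re, Complex.sub_im, Complex.ofReal_re, Complex.ofReal_im]
    ring
  have hc' : (1 + a - 2 * a * b) ≠ 0 := ne_of_gt hc
  have hN2 : Complex.normSq (zn - ((b * (1 - a) / (1 + a - 2 * a * b) : ℝ) : ℂ)) =
      (x - b * (1 - a) / (1 + a - 2 * a * b)) ^ 2 + y ^ 2 := by
    simp only [Complex.normSq_apply, Complex.sub_re, Complex.sub_im, Complex.ofReal_re,
      Complex.ofReal_im]
    ring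
  set A : ℝ := ((1 - a * b) * x + (a - b)) ^ 2 + ((1 - a * b) * y) ^ 2
      + (1 - b) * t * (1 - a ^ 2) - (1 - b) ^ 2 * ((1 + a * x) ^ 2 + (a * y) ^ 2) with hA
  set B : ℝ := (1 + a - 2 * a * b) * (x ^ 2 + y ^ 2) - 2 * b * (1 - a) * x
      + (1 - b) * (1 + a) * t - (1 + a - 2 * b) with hB
  have hAB : A = (1 - a) * B := by rw [hA, hB]; ring
  have hL : (‖(zn + (a : ℂ)) / (1 + (a : ℂ) * zn) - (b : ℂ)‖ ^ 2 +
        s * t * (1 - a ^ 2) / ‖1 + (a : ℂ) * zn‖ ^ 2 < s ^ 2) ↔ A < 0 := by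
    rw [hnum, norm_div, div_pow, Complex.sq_norm, Complex.sq_norm, hN1, hD',
      ← add_div, div_lt_iff₀ (by rw [hD'] at hD; exact hD)]
    rw [hA, hs]
    constructor <;> intro h <;> nlinarith
  have hR : (‖zn - ((b * (1 - a) / (1 + a - 2 * a * b) : ℝ) : ℂ)‖ ^ 2 +
        (1 - b) * (1 + a) / (1 + a - 2 * a * b) * t
      < (1 + a - 2 * b) / (1 + a - 2 * a * b) +
          b ^ 2 * (1 - a) ^ 2 / (1 + a - 2 * a * b) ^ 2) ↔ B < 0 := by
    rw [Complex.sq_norm, hN2, ← sub_neg]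
    have key : (x - b * (1 - a) / (1 + a - 2 * a * b)) ^ 2 + y ^ 2 +
        (1 - b) * (1 + a) / (1 + a - 2 * a * b) * t -
        ((1 + a - 2 * b) / (1 + a - 2 * a * b) +
          b ^ 2 * (1 - a) ^ 2 / (1 + a - 2 * a * b) ^ 2) = B / (1 + a - 2 * a * b) := by
      rw [hB]; generalize 1 + a - 2 * a * b = c at hc' ⊢; field_simp; ring
    rw [key, div_neg_iff]
    constructor
    · rintro (⟨_, h2⟩ | ⟨h, _⟩)
      · linarith
      · exact h
    · intro h; right; exact ⟨h, hc⟩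
  rw [hL, hR, hAB]
  constructor <;> intro h <;> nlinarith
end
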